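/- Let v_{k-1} be an inductive valuation of K[x] with key polynomial φ_{k-1}, and let φ be a key polynomial over v_{k-1}. Then deg φ_{k-1} divides deg φ. -/

import Mathlib

open Polynomial

variable {K : Type*} [Field K] {Γ : Type*} [AddCommGroup Γ] [LinearOrder Γ] [IsOrderedAddMonoid Γ]

/-- `g ∼_w h` : equivalence in the (pseudo-)valuation `w` (MacLane). -/
def EquivV {R : Type*} [CommRing R] (w : AddValuation R (WithTop Γ)) (g h : R) : Prop :=
  min (w g) (w h) < w (g - h) ∨ (w g = ⊤ ∧ w h = ⊤)

/-- `φ` equivalence-divides `g` in `w`. -/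
def EqDvd {R : Type*} [CommRing R] (w : AddValuation R (WithTop Γ)) (φ g : R) : Prop :=
  ∃ a : R, EquivV w g (a * φ)

/-- `φ` is equivalence irreducible in `w`. -/
def EqIrred {R : Type*} [CommRing R] (w : AddValuation R (WithTop Γ)) (φ : R) : Prop :=
  ∀ a b : R, EqDvd w φ (a * b) → EqDvd w φ a ∨ EqDvd w φ b

/-- `φ` is minimal in `w`. -/
def MinimalV (w : AddValuation (Polynomial K) (WithTop Γ)) (φ : Polynomial K) : Prop :=
  ∀ g : Polynomial K, g ≠ 0 → EqDvd w φ g → φ.degree ≤ g.degree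

/-- `φ` is a key polynomial over `w`. -/
def KeyOver (w : AddValuation (Polynomial K) (WithTop Γ)) (φ : Polynomial K) : Prop :=
  φ.Monic ∧ 0 < φ.degree ∧ EqIrred w φ ∧ MinimalV w φ

/-- `w = [u; w φ = μ]` is the augmented (inductive) valuation of MacLane: on the `φ`-adic
expansion `g = Σ cᵢ φ^i` (with `deg cᵢ < deg φ`) one has `w g = min ᵢ (u cᵢ + i μ)`. -/
def IsAugmentation (u w : AddValuation (Polynomial K) (WithTop Γ)) (φ : Polynomial K)
    (μ : WithTop Γ) : Prop :=
  w φ = μ ∧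
  ∀ (g : Polynomial K) (n : ℕ) (c : ℕ → Polynomial K),
    (∀ i, (c i).degree < φ.degree) → g = ∑ i ∈ Finset.range n, c i * φ ^ i →
    w g = (Finset.range n).inf fun i => u (c i) + i • μ

/-- The coefficients of the `φ`-adic expansion: `phiCoeff φ i g` is the coefficient of `φ^i`. -/
noncomputable def phiCoeff (φ : Polynomial K) : ℕ → Polynomial K → Polynomial K
  | 0, g => g %ₘ φ
  | (i+1), g => phiCoeff φ i (g /ₘ φ)

/-- The self-computation (inductiveness) property: `w` computes values of `φ`-adic
expansions as the min of the values of the terms. -/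
def ExpansionInf (w : AddValuation (Polynomial K) (WithTop Γ)) (φ : Polynomial K) : Prop :=
  ∀ (g : Polynomial K) (n : ℕ) (c : ℕ → Polynomial K),
    (∀ i, (c i).degree < φ.degree) → g = ∑ i ∈ Finset.range n, c i * φ ^ i →
    w g = (Finset.range n).inf fun i => w (c i * φ ^ i)

/-- Effective degree `D_φ(g)` with respect to `w`. -/
noncomputable def effDeg (w : AddValuation (Polynomial K) (WithTop Γ)) (φ g : Polynomial K) : ℕ :=
  sSup {i : ℕ | w g = w (phiCoeff φ i g * φ ^ i)}


section MLAux

lemma ML_nsmul_ne_top {μ : WithTop Γ} (h : μ ≠ ⊤) (n : ℕ) : n • μ ≠ ⊤ := by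
  induction n with
  | zero => rw [zero_nsmul]; exact WithTop.zero_ne_top
  | succ k ih => rw [succ_nsmul]; exact WithTop.add_ne_top.2 ⟨ih, h⟩

lemma ML_add_eq_left {R : Type*} [CommRing R] (v : AddValuation R (WithTop Γ)) {x y : R}
    (h : v x < v y) : v (x + y) = v x := by
  refine le_antisymm ?_ ?_
  · by_contra hlt
    push_neg at hlt
    have h2 : v x = v ((x + y) + (-y)) := by rw [add_neg_cancel_right]
    have h3 : min (v (x + y)) (v (-y)) ≤ v ((x + y) + -y) := v.map_add _ _
    rw [← h2] at h3
    exact absurd h3 (not_le.2 (lt_min hlt (by rwa [v.map_neg])))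
  · have := v.map_add x y
    rwa [min_eq_left h.le] at this

lemma ML_lt_sum {R : Type*} [CommRing R] {ι : Type*} (v : AddValuation R (WithTop Γ))
    (s : Finset ι) (g : ι → R) (b : WithTop Γ) (hb : b ≠ ⊤) :
    (∀ i ∈ s, b < v (g i)) → b < v (∑ i ∈ s, g i) := by
  induction s using Finset.cons_induction with
  | empty => intro _; rw [Finset.sum_empty, v.map_zero]; exact lt_top_iff_ne_top.2 hb
  | cons a s ha ih =>
    intro h
    rw [Finset.sum_cons]
    exact lt_of_lt_of_le
      (lt_min (h a (Finset.mem_cons_self a s)) (ih fun i hi => h i (Finset.mem_cons_of_mem hi)))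
      (v.map_add _ _)

lemma ML_equivV_symm {R : Type*} [CommRing R] {w : AddValuation R (WithTop Γ)} {g h : R}
    (H : EquivV w g h) : EquivV w h g := by
  rcases H with h1 | ⟨h1, h2⟩
  · refine Or.inl ?_
    rw [min_comm, show h - g = -(g - h) from (neg_sub g h).symm, w.map_neg]
    exact h1
  · exact Or.inr ⟨h2, h1⟩

lemma ML_expansion (t : Polynomial K) (ht : t.Monic) (hd : 0 < t.natDegree) :
    ∀ (n : ℕ) (g : Polynomial K), g.natDegree < (n + 1) * t.natDegree →
    ∃ c : ℕ → Polynomial K, (∀ i, (c i).degree < t.degree) ∧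
      g = ∑ i ∈ Finset.range (n + 1), c i * t ^ i ∧ c n = g /ₘ t ^ n := by
  have hbot : (⊥ : WithBot ℕ) < t.degree := by
    rw [bot_lt_iff_ne_bot, Ne, Polynomial.degree_eq_bot]; exact ht.ne_zero
  have htdeg : t.degree = (t.natDegree : WithBot ℕ) := degree_eq_natDegree ht.ne_zero
  intro n
  induction n with
  | zero =>
    intro g hg
    refine ⟨fun i => if i = 0 then g else 0, ?_, ?_, ?_⟩
    · intro i
      by_cases hi : i = 0
      · subst hi
        beta_reduce
        rw [if_pos rfl]
        rcases eq_or_ne g 0 with rfl | h0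
        · simpa using hbot
        · rw [degree_eq_natDegree h0, htdeg]
          exact_mod_cast (by simpa using hg)
      · simpa [hi] using hbot
    · simp
    · simp [divByMonic_one]
  | succ n ih =>
    intro g hg
    set R := g %ₘ t ^ (n + 1) with hR
    set Q := g /ₘ t ^ (n + 1) with hQ
    have htp : (t ^ (n + 1)).Monic := ht.pow _
    have hRQ : R + t ^ (n + 1) * Q = g := modByMonic_add_div g (t ^ (n + 1))
    have htpdeg : (t ^ (n+1)).natDegree = (n+1) * t.natDegree := natDegree_pow t (n+1)
    have hmul : (n + 1 + 1) * t.natDegree = (n + 1) * t.natDegree + t.natDegree := by ring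
    have hdR : R.natDegree < (n + 1) * t.natDegree := by
      have h1 : R.degree < (t ^ (n + 1)).degree := degree_modByMonic_lt g htp
      rcases eq_or_ne R 0 with h0 | h0
      · rw [h0, natDegree_zero]; exact Nat.mul_pos (Nat.succ_pos n) hd
      · rw [degree_eq_natDegree h0, degree_eq_natDegree htp.ne_zero] at h1
        rw [← htpdeg]
        exact_mod_cast h1
    obtain ⟨c', hc'deg, hc'sum, hc'top⟩ := ih R hdR
    refine ⟨fun i => if i = n + 1 then Q else c' i, ?_, ?_, ?_⟩
    · intro i
      by_cases hi : i = n + 1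
      · subst hi
        beta_reduce
        rw [if_pos rfl]
        rcases eq_or_ne Q 0 with h0 | h0
        · simpa [h0] using hbot
        · have hQn : Q.natDegree = g.natDegree - (n + 1) * t.natDegree := by
            rw [hQ, natDegree_divByMonic g htp, htpdeg]
          have hlt : Q.natDegree < t.natDegree := by omega
          rw [degree_eq_natDegree h0, htdeg]
          exact_mod_cast hlt
      · beta_reduce
        rw [if_neg hi]
        exact hc'deg i
    · rw [Finset.sum_range_succ]
      beta_reduce
      rw [if_pos rfl]
      have heq : ∑ i ∈ Finset.range (n + 1), (if i = n + 1 then Q else c' i) * t ^ i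
          = ∑ i ∈ Finset.range (n + 1), c' i * t ^ i := by
        refine Finset.sum_congr rfl fun i hi => ?_
        rw [if_neg (by have := Finset.mem_range.1 hi; omega)]
      rw [heq, ← hc'sum, ← hRQ]; ring
    · simp

lemma ML_lemA (u w : AddValuation (Polynomial K) (WithTop Γ)) (t : Polynomial K) (μ : WithTop Γ)
    (htmon : t.Monic) (hμ : u t < μ)
    (haug2 : ∀ (g : Polynomial K) (n : ℕ) (c : ℕ → Polynomial K),
      (∀ i, (c i).degree < t.degree) → g = ∑ i ∈ Finset.range n, c i * t ^ i →
      w g = (Finset.range n).inf fun i => u (c i) + i • μ)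
    (hL : ∀ g : Polynomial K, g ≠ 0 → g.degree < t.degree → u g ≠ ⊤)
    (hwt : w t = μ)
    {a b : Polynomial K} (ha : a ≠ 0) (hb : b ≠ 0)
    (hda : a.degree < t.degree) (hdb : b.degree < t.degree) :
    EquivV w (a * b) ((a * b) %ₘ t) ∧ w (a * b) = u ((a * b) %ₘ t) ∧
      u ((a * b) %ₘ t) < u ((a * b) /ₘ t) + μ := by
  have ht0 : t ≠ 0 := htmon.ne_zero
  have htdeg : t.degree = (t.natDegree : WithBot ℕ) := degree_eq_natDegree ht0
  have hbot : (⊥ : WithBot ℕ) < t.degree := by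
    rw [bot_lt_iff_ne_bot, Ne, Polynomial.degree_eq_bot]; exact ht0
  have lemSmall : ∀ g : Polynomial K, g.degree < t.degree → w g = u g := by
    intro g hg
    have h1 := haug2 g 1 (fun _ => g) (fun _ => hg) (by simp)
    simpa [Finset.range_one, zero_nsmul] using h1
  set f := (a * b) %ₘ t with hf
  set e := (a * b) /ₘ t with he
  have hfe : f + t * e = a * b := modByMonic_add_div (a * b) t
  have hfd : f.degree < t.degree := degree_modByMonic_lt _ htmon
  have hed : e.degree < t.degree := by
    rcases eq_or_ne e 0 with h0 | h0
    · rw [h0, degree_zero]; exact hbot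
    · have h1 : e.natDegree = (a * b).natDegree - t.natDegree := natDegree_divByMonic _ htmon
      have h2 : (a * b).natDegree = a.natDegree + b.natDegree := natDegree_mul ha hb
      have h3 : a.natDegree < t.natDegree := by
        rw [degree_eq_natDegree ha, htdeg] at hda; exact_mod_cast hda
      have h4 : b.natDegree < t.natDegree := by
        rw [degree_eq_natDegree hb, htdeg] at hdb; exact_mod_cast hdb
      have h5 : 0 < t.natDegree := by omega
      rw [degree_eq_natDegree h0, htdeg]
      exact_mod_cast (by omega : e.natDegree < t.natDegree)
  have hab : w (a * b) = min (u f) (u e + μ) := by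
    have h1 := haug2 (a * b) 2 (fun i => if i = 0 then f else if i = 1 then e else 0)
      ?_ ?_
    · rw [h1]
      rw [Finset.range_add_one, Finset.inf_insert, Finset.range_one, Finset.inf_singleton]
      beta_reduce
      rw [if_neg (one_ne_zero), if_pos rfl, if_pos rfl]
      rw [zero_nsmul, one_nsmul, add_zero, min_comm]
    · intro i
      rcases i with _ | _ | i
      · simpa using hfd
      · simpa using hed
      · simpa using hbot
    · rw [Finset.range_add_one, Finset.sum_insert (by simp), Finset.range_one,
        Finset.sum_singleton]
      beta_reduce
      rw [if_neg (one_ne_zero), if_pos rfl, if_pos rfl]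
      rw [← hfe]; ring
  have hwa : w a = u a := lemSmall a hda
  have hwb : w b = u b := lemSmall b hdb
  by_cases h1 : u f < u e + μ
  · refine ⟨Or.inl ?_, by rw [hab, min_eq_left h1.le], h1⟩
    have h2 : a * b - f = t * e := by rw [← hfe]; ring
    have h3 : w (a * b - f) = μ + u e := by rw [h2, w.map_mul, hwt, lemSmall e hed]
    have h4 : w (a * b) = u f := by rw [hab, min_eq_left h1.le]
    have h5 : w f = u f := lemSmall f hfd
    rw [h3, h4, h5, min_self, add_comm]
    exact h1
  · exfalso
    push_neg at h1
    have he0 : e ≠ 0 := by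
      intro h0
      rw [h0, u.map_zero, top_add, top_le_iff] at h1
      have hfab : f = a * b := by rw [← hfe, h0, mul_zero, add_zero]
      exact hL f (hfab ▸ mul_ne_zero ha hb) hfd h1
    have hue : u e ≠ ⊤ := hL e he0 hed
    have h3 : u (t * e) < u f := by
      rw [u.map_mul]
      calc u t + u e < μ + u e := WithTop.add_lt_add_right hue hμ
        _ = u e + μ := add_comm _ _
        _ ≤ u f := h1
    have h4 : u (a * b) = u (t * e) := by
      rw [← hfe, add_comm]
      exact ML_add_eq_left u h3
    have h6 : w (a * b) = u a + u b := by rw [w.map_mul, hwa, hwb]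
    have h7 : u (a * b) = u e + μ := by rw [u.map_mul, ← h6, hab, min_eq_right h1]
    rw [h4, u.map_mul] at h7
    have h8 : u t + u e < u e + μ := by
      calc u t + u e < μ + u e := WithTop.add_lt_add_right hue hμ
        _ = u e + μ := add_comm _ _
    rw [h7] at h8
    exact lt_irrefl _ h8

end MLAux

/-- **MacLane, Theorem 9.4.**  Let `w = [u; w φprev = μ]` be an inductive
valuation of `K[x]` with (last) key polynomial `φprev`, and let `φ` be a key polynomial over
`w`.  Then `deg φprev` divides `deg φ`.  (The inductiveness of `w` is encoded by the
augmentation relation together with the self-computation property `ExpansionInf w φprev`.) -/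
theorem stmt_7 {K : Type*} [Field K] {Γ : Type*} [AddCommGroup Γ] [LinearOrder Γ] [IsOrderedAddMonoid Γ]
    (u w : AddValuation (Polynomial K) (WithTop Γ)) (φprev : Polynomial K) (μ : WithTop Γ)
    (hkeyprev : KeyOver u φprev) (hμ : u φprev < μ)
    (haug : IsAugmentation u w φprev μ) (hself : ExpansionInf w φprev)
    (φ : Polynomial K) (hkey : KeyOver w φ) :
    φprev.natDegree ∣ φ.natDegree := by
  classical
  obtain ⟨htmon, htdeg, htirr, htmin⟩ := hkeyprev
  obtain ⟨hφmon, hφdeg, hφirr, hφmin⟩ := hkey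
  set t := φprev with ht_def
  have ht0 : t ≠ 0 := htmon.ne_zero
  have hφ0 : φ ≠ 0 := hφmon.ne_zero
  have hd1 : 0 < t.natDegree := natDegree_pos_iff_degree_pos.2 htdeg
  have hD1 : 0 < φ.natDegree := natDegree_pos_iff_degree_pos.2 hφdeg
  have htdeg' : t.degree = (t.natDegree : WithBot ℕ) := degree_eq_natDegree ht0
  have hφdeg' : φ.degree = (φ.natDegree : WithBot ℕ) := degree_eq_natDegree hφ0
  have hwt : w t = μ := haug.1
  have haug2 := haug.2
  have hbot : (⊥ : WithBot ℕ) < t.degree := by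
    rw [bot_lt_iff_ne_bot, Ne, Polynomial.degree_eq_bot]; exact ht0
  have lemSmall : ∀ g : Polynomial K, g.degree < t.degree → w g = u g := by
    intro g hg
    have h1 := haug2 g 1 (fun _ => g) (fun _ => hg) (by simp)
    simpa [Finset.range_one, zero_nsmul] using h1
  have lemL : ∀ g : Polynomial K, g ≠ 0 → g.degree < t.degree → u g ≠ ⊤ := by
    intro g hg0 hgd htop
    have hdvd : EqDvd u t g := ⟨0, Or.inr ⟨htop, by rw [zero_mul]; exact u.map_zero⟩⟩
    exact absurd (htmin g hg0 hdvd) (not_le.2 hgd)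
  have hcast : ∀ g : Polynomial K, g ≠ 0 → g.degree < t.degree → g.natDegree < t.natDegree := by
    intro g h0 hgd
    rw [degree_eq_natDegree h0, htdeg'] at hgd
    exact_mod_cast hgd
  have hut : u t ≠ ⊤ := ne_top_of_lt hμ
  -- t is irreducible as a polynomial
  have htIrr : Irreducible t := by
    constructor
    · intro hu
      have h1 := Polynomial.degree_eq_zero_of_isUnit hu
      rw [h1] at htdeg
      exact lt_irrefl _ htdeg
    · intro f g hfg
      by_contra hcon
      push_neg at hcon
      obtain ⟨hf, hg⟩ := hcon
      have hf0 : f ≠ 0 := by rintro rfl; rw [zero_mul] at hfg; exact ht0 hfg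
      have hg0 : g ≠ 0 := by rintro rfl; rw [mul_zero] at hfg; exact ht0 hfg
      have hdvd : EqDvd u t (f * g) := by
        refine ⟨1, Or.inl ?_⟩
        rw [one_mul, ← hfg, sub_self, u.map_zero, min_self]
        exact lt_top_iff_ne_top.2 hut
      have hnd : t.natDegree = f.natDegree + g.natDegree := by
        rw [hfg, natDegree_mul hf0 hg0]
      rcases htirr f g hdvd with h | h
      · have h1 := htmin f hf0 h
        rw [htdeg', degree_eq_natDegree hf0] at h1
        have h2 : t.natDegree ≤ f.natDegree := by exact_mod_cast h1
        have h3 : g.natDegree = 0 := by omega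
        exact hg (isUnit_iff_degree_eq_zero.2
          (by rw [degree_eq_natDegree hg0, h3, Nat.cast_zero]))
      · have h1 := htmin g hg0 h
        rw [htdeg', degree_eq_natDegree hg0] at h1
        have h2 : t.natDegree ≤ g.natDegree := by exact_mod_cast h1
        have h3 : f.natDegree = 0 := by omega
        exact hf (isUnit_iff_degree_eq_zero.2
          (by rw [degree_eq_natDegree hf0, h3, Nat.cast_zero]))
  by_cases hμtop : μ = ⊤
  · -- the degenerate case `μ = ⊤` : here necessarily `φ = t`.
    have hdvdt : EqDvd w φ t :=
      ⟨0, Or.inr ⟨by rw [hwt, hμtop], by rw [zero_mul]; exact w.map_zero⟩⟩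
    have hle : φ.degree ≤ t.degree := hφmin t ht0 hdvdt
    by_cases hlt : φ.degree < t.degree
    · exfalso
      set s := t %ₘ φ with hs_def
      set q := t /ₘ φ with hq_def
      have hts : s + φ * q = t := modByMonic_add_div t φ
      have hsd : s.degree < φ.degree := degree_modByMonic_lt t hφmon
      have hsd' : s.degree < t.degree := lt_trans hsd hlt
      have hs0 : s ≠ 0 := by
        intro h0
        rw [h0, zero_add] at hts
        have hq0 : q ≠ 0 := by
          intro h0'
          rw [h0', mul_zero] at hts
          exact ht0 hts.symm
        have hqd : q.degree < t.degree := by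
          have h1 : t.natDegree = φ.natDegree + q.natDegree := by
            rw [← hts, natDegree_mul hφ0 hq0]
          rw [degree_eq_natDegree hq0, htdeg']
          exact_mod_cast (by omega : q.natDegree < t.natDegree)
        have h2 : w t = w φ + w q := by rw [← hts, w.map_mul]
        rw [hwt, hμtop, lemSmall φ hlt, lemSmall q hqd] at h2
        exact (WithTop.add_ne_top.2 ⟨lemL φ hφ0 hlt, lemL q hq0 hqd⟩) h2.symm
      have hdvds : EqDvd w φ s := by
        refine ⟨-q, Or.inl ?_⟩
        have h1 : s - -q * φ = t := by rw [← hts]; ring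
        rw [h1, hwt, hμtop]
        refine lt_of_le_of_lt (min_le_left _ _) ?_
        rw [lemSmall s hsd']
        exact lt_top_iff_ne_top.2 (lemL s hs0 hsd')
      exact absurd (hφmin s hs0 hdvds) (not_le.2 hsd)
    · have hdeq : φ.degree = t.degree := le_antisymm hle (not_lt.1 hlt)
      set s' := φ - t with hs'_def
      rcases eq_or_ne s' 0 with h0 | hs'0
      · have hφt : φ = t := by rwa [hs'_def, sub_eq_zero] at h0
        rw [hφt]
      · exfalso
        have hs'd : s'.degree < φ.degree :=
          degree_sub_lt hdeq hφ0 (by rw [hφmon.leadingCoeff, htmon.leadingCoeff])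
        have hs'd' : s'.degree < t.degree := hdeq ▸ hs'd
        have hdvds' : EqDvd w φ s' := by
          refine ⟨1, Or.inl ?_⟩
          have h1 : s' - 1 * φ = -t := by rw [hs'_def]; ring
          rw [h1, w.map_neg, hwt, hμtop]
          refine lt_of_le_of_lt (min_le_left _ _) ?_
          rw [lemSmall s' hs'd']
          exact lt_top_iff_ne_top.2 (lemL s' hs'0 hs'd')
        exact absurd (hφmin s' hs'0 hdvds') (not_le.2 hs'd)
  · -- the main case `μ ≠ ⊤`
    set n := φ.natDegree / t.natDegree with hn_def
    set r := φ.natDegree % t.natDegree with hr_def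
    have hdm := Nat.div_add_mod φ.natDegree t.natDegree
    have hDnr : n * t.natDegree + r = φ.natDegree := by rw [Nat.mul_comm]; exact hdm
    have hrd : r < t.natDegree := Nat.mod_lt _ hd1
    by_cases hr0 : r = 0
    · exact Nat.dvd_of_mod_eq_zero hr0
    · exfalso
      by_cases hn0 : n = 0
      · -- here `deg φ < deg t`; every such φ is an equivalence-unit, contradiction.
        have hDd : φ.natDegree < t.natDegree := by
          rw [hn0, zero_mul] at hDnr; omega
        have hφd' : φ.degree < t.degree := by
          rw [hφdeg', htdeg']; exact_mod_cast hDd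
        have hnotdvd : ¬ t ∣ φ := fun hdvd =>
          absurd (degree_le_of_dvd hdvd hφ0) (not_le.2 hφd')
        have hcop : IsCoprime t φ := htIrr.coprime_iff_not_dvd.2 hnotdvd
        obtain ⟨U, V, hUV⟩ := hcop
        set b := V %ₘ t with hb_def
        have hbV : b + t * (V /ₘ t) = V := modByMonic_add_div V t
        have hmod : (φ * b) %ₘ t = 1 := by
          have h1 : φ * b = 1 + (-U - φ * (V /ₘ t)) * t := by
            linear_combination φ * hbV + hUV
          rw [h1, add_modByMonic]
          have h2 : ((-U - φ * (V /ₘ t)) * t) %ₘ t = 0 :=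
            (modByMonic_eq_zero_iff_dvd htmon).2 (dvd_mul_left t _)
          rw [h2, add_zero]
          exact (modByMonic_eq_self_iff htmon).2 (by rw [degree_one]; exact htdeg)
        have hb0 : b ≠ 0 := by
          intro h0
          rw [h0, mul_zero, zero_modByMonic] at hmod
          exact one_ne_zero hmod.symm
        have hbd : b.degree < t.degree := degree_modByMonic_lt V htmon
        obtain ⟨hEq, hVal, _⟩ := ML_lemA u w t μ htmon hμ haug2 lemL hwt hφ0 hb0 hφd' hbd
        rw [hmod] at hEq
        have hdvd1 : EqDvd w φ 1 := ⟨b, by rw [mul_comm b φ]; exact ML_equivV_symm hEq⟩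
        have h1 := hφmin 1 one_ne_zero hdvd1
        rw [degree_one] at h1
        exact absurd h1 (not_le.2 hφdeg)
      · -- the main case: `n ≥ 1` and `r ≥ 1`.
        have hn1 : 1 ≤ n := Nat.one_le_iff_ne_zero.2 hn0
        have hr1 : 1 ≤ r := Nat.one_le_iff_ne_zero.2 hr0
        have hmulsucc : (n + 1) * t.natDegree = n * t.natDegree + t.natDegree := by ring
        have hφlt : φ.natDegree < (n + 1) * t.natDegree := by omega
        obtain ⟨c, hcdeg, hcsum, hctop⟩ := ML_expansion t htmon hd1 n φ hφlt
        have hcn_nd : (c n).natDegree = r := by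
          rw [hctop, natDegree_divByMonic _ (htmon.pow n), natDegree_pow]
          omega
        have hcn0 : c n ≠ 0 := by
          intro h0; rw [h0, natDegree_zero] at hcn_nd; omega
        have hucn : u (c n) ≠ ⊤ := lemL _ hcn0 (hcdeg n)
        have hnμ : n • μ ≠ ⊤ := ML_nsmul_ne_top hμtop n
        -- Fact 1 : the top term of the expansion attains the minimum
        have hwφexp : w φ = (Finset.range (n + 1)).inf fun i => u (c i) + i • μ :=
          haug2 φ (n + 1) c hcdeg hcsum
        set hlow := φ - c n * t ^ n with hlow_def
        have hlowsum : hlow = ∑ i ∈ Finset.range n, c i * t ^ i := by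
          rw [hlow_def, hcsum, Finset.sum_range_succ]; ring
        have hwlow : w hlow = (Finset.range n).inf fun i => u (c i) + i • μ :=
          haug2 hlow n c hcdeg hlowsum
        have hsplit : ((Finset.range (n + 1)).inf fun i => u (c i) + i • μ)
            = (u (c n) + n • μ) ⊓ ((Finset.range n).inf fun i => u (c i) + i • μ) := by
          rw [Finset.range_add_one, Finset.inf_insert]
        have hwcn : w (c n * t ^ n) = u (c n) + n • μ := by
          rw [w.map_mul, w.map_pow, hwt, lemSmall _ (hcdeg n)]
        have hlowdeg : hlow.degree < φ.degree := by
          have hterm : ∀ i ∈ Finset.range n,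
              (c i * t ^ i).degree ≤ ((n * t.natDegree - 1 : ℕ) : WithBot ℕ) := by
            intro i hi
            rcases eq_or_ne (c i) 0 with h0 | h0
            · rw [h0, zero_mul, degree_zero]; exact bot_le
            · have h2 : (c i * t ^ i).natDegree = (c i).natDegree + i * t.natDegree := by
                rw [natDegree_mul h0 (pow_ne_zero i ht0), natDegree_pow]
              have h3 : (c i).natDegree < t.natDegree := hcast _ h0 (hcdeg i)
              have h4 : i < n := Finset.mem_range.1 hi
              have h5 : i * t.natDegree ≤ (n - 1) * t.natDegree :=
                mul_le_mul_left (by omega) _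
              have h6 : (n - 1) * t.natDegree + t.natDegree = n * t.natDegree := by
                have h7 : n - 1 + 1 = n := by omega
                calc (n - 1) * t.natDegree + t.natDegree
                    = (n - 1 + 1) * t.natDegree := by ring
                  _ = n * t.natDegree := by rw [h7]
              refine le_trans degree_le_natDegree ?_
              rw [h2]
              exact_mod_cast (by omega : (c i).natDegree + i * t.natDegree
                ≤ n * t.natDegree - 1)
          have h8 : hlow.degree ≤ ((n * t.natDegree - 1 : ℕ) : WithBot ℕ) := by
            rw [hlowsum]
            exact le_trans (degree_sum_le _ _) (Finset.sup_le hterm)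
          rw [hφdeg']
          refine lt_of_le_of_lt h8 ?_
          exact_mod_cast (by omega : n * t.natDegree - 1 < φ.natDegree)
        have hFact1 : w φ = u (c n) + n • μ := by
          rcases le_or_gt (u (c n) + n • μ)
              ((Finset.range n).inf fun i => u (c i) + i • μ) with hle | hlt
          · rw [hwφexp, hsplit, inf_eq_left.2 hle]
          · exfalso
            have hwh' : w φ = w hlow := by
              rw [hwφexp, hsplit, inf_eq_right.2 hlt.le, ← hwlow]
            have hwh_lt : w hlow < u (c n) + n • μ := by rw [hwlow]; exact hlt
            have hh0 : hlow ≠ 0 := by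
              intro h0
              rw [h0, w.map_zero] at hwh_lt
              exact not_top_lt hwh_lt
            have hdvdh : EqDvd w φ hlow := by
              refine ⟨1, Or.inl ?_⟩
              have h1 : hlow - 1 * φ = -(c n * t ^ n) := by rw [hlow_def]; ring
              rw [h1, w.map_neg, hwcn]
              exact lt_of_le_of_lt (min_le_left _ _) hwh_lt
            exact absurd (hφmin hlow hh0 hdvdh) (not_le.2 hlowdeg)
        have hBle : ∀ i, i < n → u (c n) + n • μ ≤ u (c i) + i • μ := by
          intro i hi
          rw [← hFact1, hwφexp]
          exact Finset.inf_le (Finset.mem_range.2 (by omega))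
        -- division of t by (a monic rescaling of) c n
        set γ := (c n).leadingCoeff with hγ_def
        have hγ0 : γ ≠ 0 := leadingCoeff_ne_zero.2 hcn0
        set Cm := Polynomial.C γ⁻¹ * c n with hCm_def
        have hCmon : Cm.Monic := by
          rw [Monic, hCm_def, leadingCoeff_mul, leadingCoeff_C, inv_mul_cancel₀ hγ0]
        have hCmdeg : Cm.degree = (c n).degree := by
          rw [hCm_def, degree_mul, degree_C (inv_ne_zero hγ0), zero_add]
        set s := t %ₘ Cm with hs_def
        set q := Polynomial.C γ⁻¹ * (t /ₘ Cm) with hq_def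
        have hts : s + c n * q = t := by
          have h1 := modByMonic_add_div t Cm
          rw [hs_def, hq_def, hCm_def]
          rw [hCm_def] at h1
          linear_combination h1
        have hsdegC : s.degree < (c n).degree := hCmdeg ▸ degree_modByMonic_lt t hCmon
        have hsdeg' : s.degree < t.degree := lt_trans hsdegC (hcdeg n)
        have hq0 : q ≠ 0 := by
          intro h0
          rw [h0, mul_zero, add_zero] at hts
          exact absurd (hts ▸ hsdeg') (lt_irrefl _)
        have hqdeg : q.degree < t.degree := by
          have h1 : c n * q = t - s := eq_sub_of_add_eq' hts
          have h2 : (t - s).degree = t.degree := degree_sub_eq_left_of_degree_lt hsdeg'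
          have h3 : (c n).degree + q.degree = t.degree := by rw [← degree_mul, h1, h2]
          rw [degree_eq_natDegree hq0, degree_eq_natDegree hcn0, htdeg', hcn_nd] at h3
          have h4 : r + q.natDegree = t.natDegree := by exact_mod_cast h3
          rw [degree_eq_natDegree hq0, htdeg']
          exact_mod_cast (by omega : q.natDegree < t.natDegree)
        have huq : u q ≠ ⊤ := lemL q hq0 hqdeg
        obtain ⟨hEq_cnq, hVal_cnq, _⟩ :=
          ML_lemA u w t μ htmon hμ haug2 lemL hwt hcn0 hq0 (hcdeg n) hqdeg
        have hmod_cnq : (c n * q) %ₘ t = -s := by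
          have h1 : c n * q = -s + 1 * t := by linear_combination hts
          rw [h1, add_modByMonic]
          have h2 : (1 * t) %ₘ t = 0 := by
            rw [one_mul]; exact (modByMonic_eq_zero_iff_dvd htmon).2 dvd_rfl
          rw [h2, add_zero]
          exact (modByMonic_eq_self_iff htmon).2 (by rw [degree_neg]; exact hsdeg')
        have hus_eq : u q + u (c n) = u s := by
          have h1 := hVal_cnq
          rw [hmod_cnq, u.map_neg] at h1
          rw [w.map_mul, lemSmall _ (hcdeg n), lemSmall q hqdeg] at h1
          rw [add_comm]; exact h1
        have hus_lt : u s < μ := by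
          rw [hmod_cnq] at hEq_cnq
          rcases hEq_cnq with hlt2 | ⟨h1, h2⟩
          · have h3 : c n * q - -s = t := by linear_combination hts
            rw [h3, hwt] at hlt2
            have h4 : w (c n * q) = u s := by rw [hVal_cnq, hmod_cnq, u.map_neg]
            calc u s = min (w (c n * q)) (w (-s)) := by
                  rw [h4, lemSmall (-s) (by rw [degree_neg]; exact hsdeg'), u.map_neg,
                    min_self]
              _ < μ := hlt2
          · exfalso
            rw [w.map_mul, lemSmall _ (hcdeg n), lemSmall q hqdeg] at h1
            exact (WithTop.add_ne_top.2 ⟨hucn, huq⟩) h1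
        have hs0 : s ≠ 0 := by
          intro h0; rw [h0, u.map_zero] at hus_lt; exact not_top_lt hus_lt
        have hus_ne : u s ≠ ⊤ := ne_top_of_lt hus_lt
        -- the reduction of the lower terms
        set E := fun i => (q * c i) /ₘ t with hE_def
        set F := fun i => (q * c i) %ₘ t with hF_def
        have hEF : ∀ i, F i + t * E i = q * c i := fun i => modByMonic_add_div _ t
        have hFdeg : ∀ i, (F i).degree < t.degree := fun i => degree_modByMonic_lt _ htmon
        have hEdeg : ∀ i, (E i).degree < t.degree := by
          intro i
          rcases eq_or_ne (E i) 0 with h0 | h0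
          · rw [h0, degree_zero]; exact hbot
          · rcases eq_or_ne (c i) 0 with h1 | h1
            · exfalso; apply h0; rw [hE_def]; simp [h1]
            · have h2 : (E i).natDegree = (q * c i).natDegree - t.natDegree := by
                rw [hE_def]; exact natDegree_divByMonic _ htmon
              have h3 : (q * c i).natDegree = q.natDegree + (c i).natDegree :=
                natDegree_mul hq0 h1
              have h4 : q.natDegree < t.natDegree := hcast q hq0 hqdeg
              have h5 : (c i).natDegree < t.natDegree := hcast _ h1 (hcdeg i)
              rw [degree_eq_natDegree h0, htdeg']
              exact_mod_cast (by omega : (E i).natDegree < t.natDegree)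
        set ψ := (∑ i ∈ Finset.range n, F i * t ^ i) + -s * t ^ n with hψ_def
        have hRne : u s + n • μ ≠ ⊤ := WithTop.add_ne_top.2 ⟨hus_ne, hnμ⟩
        have hwqφ : w (q * φ) = u s + n • μ := by
          rw [w.map_mul, lemSmall q hqdeg, hFact1, ← add_assoc, hus_eq]
        have hid : q * φ - ψ = (∑ i ∈ Finset.range n, E i * t ^ (i + 1)) + t ^ (n + 1) := by
          have h1 : q * φ = (∑ i ∈ Finset.range n, q * c i * t ^ i) + c n * q * t ^ n := by
            rw [hcsum, Finset.mul_sum, Finset.sum_range_succ,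
              show (∑ i ∈ Finset.range n, q * (c i * t ^ i))
                  = ∑ i ∈ Finset.range n, q * c i * t ^ i from
                Finset.sum_congr rfl fun i _ => (mul_assoc _ _ _).symm]
            ring
          have h2 : ∀ i ∈ Finset.range n,
              q * c i * t ^ i = F i * t ^ i + E i * t ^ (i + 1) := by
            intro i _
            rw [← hEF i]; ring
          rw [h1, Finset.sum_congr rfl h2, Finset.sum_add_distrib, hψ_def]
          have h3 : c n * q = t - s := eq_sub_of_add_eq' hts
          rw [h3]; ring
        have hterm : ∀ i ∈ Finset.range n, u s + n • μ < w (E i * t ^ (i + 1)) := by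
          intro i hi
          have hi' : i < n := Finset.mem_range.1 hi
          have hwE : w (E i * t ^ (i + 1)) = u (E i) + (i + 1) • μ := by
            rw [w.map_mul, w.map_pow, hwt, lemSmall _ (hEdeg i)]
          rw [hwE]
          rcases eq_or_ne (E i) 0 with h0 | h0
          · rw [h0, u.map_zero, top_add]
            exact lt_top_iff_ne_top.2 hRne
          · have hci0 : c i ≠ 0 := by
              intro h1; apply h0; rw [hE_def]; simp [h1]
            obtain ⟨_, hVal_i, hlt_i⟩ :=
              ML_lemA u w t μ htmon hμ haug2 lemL hwt hq0 hci0 hqdeg (hcdeg i)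
            have h4 : u (F i) = u q + u (c i) := by
              rw [w.map_mul, lemSmall q hqdeg, lemSmall _ (hcdeg i)] at hVal_i
              rw [hF_def]; exact hVal_i.symm
            have h5 : u (c n) + n • μ ≤ u (c i) + i • μ := hBle i hi'
            have h6 : u s + n • μ ≤ u (F i) + i • μ := by
              rw [← hus_eq, h4]
              calc u q + u (c n) + n • μ = u q + (u (c n) + n • μ) := by rw [add_assoc]
                _ ≤ u q + (u (c i) + i • μ) := add_le_add_right h5 _
                _ = u q + u (c i) + i • μ := (add_assoc _ _ _).symm
            have hiμ : i • μ ≠ ⊤ := ML_nsmul_ne_top hμtop i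
            have h7 : u (F i) + i • μ < u (E i) + μ + i • μ := by
              rw [hF_def, hE_def] at *
              exact WithTop.add_lt_add_right hiμ hlt_i
            have h8 : u (E i) + μ + i • μ = u (E i) + (i + 1) • μ := by
              rw [add_assoc, add_comm μ (i • μ), ← succ_nsmul]
            exact lt_of_le_of_lt h6 (h8 ▸ h7)
        have htop_term : u s + n • μ < w (t ^ (n + 1)) := by
          rw [w.map_pow, hwt, succ_nsmul, add_comm (n • μ) μ, ← hwt]
          rw [hwt]
          exact WithTop.add_lt_add_right hnμ hus_lt
        have hdiff : u s + n • μ < w (q * φ - ψ) := by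
          rw [hid]
          refine lt_of_lt_of_le (lt_min ?_ htop_term) (w.map_add _ _)
          exact ML_lt_sum w (Finset.range n) (fun i => E i * t ^ (i + 1)) _ hRne hterm
        have hdvdψ : EqDvd w φ ψ := by
          refine ⟨q, Or.inl ?_⟩
          have h1 : w (ψ - q * φ) = w (q * φ - ψ) := by
            rw [show ψ - q * φ = -(q * φ - ψ) from (neg_sub _ _).symm, w.map_neg]
          rw [h1]
          exact lt_of_le_of_lt (min_le_right _ _) (hwqφ ▸ hdiff)
        have hψ0 : ψ ≠ 0 := by
          intro h0
          have h1 := hdiff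
          rw [h0, sub_zero, hwqφ] at h1
          exact lt_irrefl _ h1
        have hψdeg : ψ.degree < φ.degree := by
          have hb1 : (∑ i ∈ Finset.range n, F i * t ^ i).degree
              ≤ ((φ.natDegree - 1 : ℕ) : WithBot ℕ) := by
            refine le_trans (degree_sum_le _ _) (Finset.sup_le ?_)
            intro i hi
            rcases eq_or_ne (F i) 0 with h0 | h0
            · rw [h0, zero_mul, degree_zero]; exact bot_le
            · have h2 : (F i * t ^ i).natDegree = (F i).natDegree + i * t.natDegree := by
                rw [natDegree_mul h0 (pow_ne_zero i ht0), natDegree_pow]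
              have h3 : (F i).natDegree < t.natDegree := hcast _ h0 (hFdeg i)
              have h4 : i < n := Finset.mem_range.1 hi
              have h5 : i * t.natDegree ≤ (n - 1) * t.natDegree :=
                mul_le_mul_left (by omega) _
              have h6 : (n - 1) * t.natDegree + t.natDegree = n * t.natDegree := by
                have h7 : n - 1 + 1 = n := by omega
                calc (n - 1) * t.natDegree + t.natDegree
                    = (n - 1 + 1) * t.natDegree := by ring
                  _ = n * t.natDegree := by rw [h7]
              refine le_trans degree_le_natDegree ?_
              rw [h2]
              exact_mod_cast (by omega : (F i).natDegree + i * t.natDegree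
                ≤ φ.natDegree - 1)
          have hb2 : (-s * t ^ n).degree ≤ ((φ.natDegree - 1 : ℕ) : WithBot ℕ) := by
            have h0 : (-s : Polynomial K) ≠ 0 := neg_ne_zero.2 hs0
            have h2 : (-s * t ^ n).natDegree = (-s).natDegree + n * t.natDegree := by
              rw [natDegree_mul h0 (pow_ne_zero n ht0), natDegree_pow]
            have h3 : (-s).natDegree < r := by
              rw [natDegree_neg]
              have h4 : s.degree < (c n).degree := hsdegC
              rw [degree_eq_natDegree hs0, degree_eq_natDegree hcn0, hcn_nd] at h4
              exact_mod_cast h4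
            refine le_trans degree_le_natDegree ?_
            rw [h2]
            exact_mod_cast (by omega : (-s).natDegree + n * t.natDegree ≤ φ.natDegree - 1)
          have h9 : ψ.degree ≤ ((φ.natDegree - 1 : ℕ) : WithBot ℕ) := by
            rw [hψ_def]
            exact le_trans (degree_add_le _ _) (max_le hb1 hb2)
          rw [hφdeg']
          refine lt_of_le_of_lt h9 ?_
          exact_mod_cast (by omega : φ.natDegree - 1 < φ.natDegree)
        exact absurd (hφmin ψ hψ0 hdvdψ) (not_le.2 hψdeg)
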